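/- Let α be a limit ordinal, G a group, and H an α-hypercentral subgroup of G (Z_α(H) = H). Then the descending chain of envelopes stabilizes at α+1: for every ordinal λ with α+1 ≤ λ, E_{α+1}(H) = E_λ(H). -/

import Mathlib

open Ordinal

section Defs
variable {G : Type*} [Group G]

attribute [local instance] Classical.propDecidable

/-- The commutator `[x,y] = x⁻¹y⁻¹xy` as in the paper. -/
def pcomm (x y : G) : G := x⁻¹ * y⁻¹ * x * y

/-- Transfinite upper central series of the (sub)set `E` of `G`, viewed inside `G`. -/
noncomputable def ZSet (E : Set G) (α : Ordinal) : Set G :=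
  if α = 0 then {1}
  else if hs : ∃ β < α, α = β + 1 then
    {x | x ∈ E ∧ ∀ g ∈ E, pcomm x g ∈ ZSet E hs.choose}
  else ⋃ (β : Ordinal) (_ : β < α), ZSet E β
termination_by α
decreasing_by all_goals first | assumption | exact hs.choose_spec.1

/-- Transfinite iterated centralizers `C_E^α(H)` of `H` inside the ambient set `E ⊆ G`. -/
noncomputable def CIter (E H : Set G) (α : Ordinal) : Set G :=
  if α = 0 then {1}
  else if hs : ∃ β < α, α = β + 1 then
    {x | x ∈ E ∧ (∀ β < α, ∀ a : G, a ∈ CIter E H β ↔ x * a * x⁻¹ ∈ CIter E H β)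
       ∧ ∀ h ∈ H, pcomm x h ∈ CIter E H hs.choose}
  else ⋃ (β : Ordinal) (_ : β < α), CIter E H β
termination_by α
decreasing_by all_goals first | assumption | exact hs.choose_spec.1

/-- Transfinite envelopes `E_α(H)` of `H ⊆ G`. -/
noncomputable def Env (H : Set G) (α : Ordinal) : Set G :=
  if α = 0 then Set.univ
  else if hs : ∃ β < α, α = β + 1 then
    {g | g ∈ Env H hs.choose ∧
      ∀ c ∈ CIter (Env H hs.choose) H (hs.choose + 1),
        pcomm g c ∈ CIter (Env H hs.choose) H hs.choose}
  else ⋂ (β : Ordinal) (_ : β < α), Env H β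
termination_by α
decreasing_by all_goals first | assumption | exact hs.choose_spec.1

end Defs

section Basics
variable {G : Type*} [Group G]

/- ## ordinal helpers -/

lemma osucc_ne_zero (β : Ordinal) : β + 1 ≠ 0 := by
  rw [Ordinal.add_one_eq_succ]; exact Order.succ_ne_bot β

lemma olt_succ (β : Ordinal) : β < β + 1 := by
  rw [Ordinal.add_one_eq_succ]; exact Order.lt_succ β

lemma olt_succ_iff {a b : Ordinal} : a < b + 1 ↔ a ≤ b := by
  rw [Ordinal.add_one_eq_succ, Order.lt_succ_iff]

lemma osucc_le_succ {a b : Ordinal} (h : a + 1 ≤ b + 1) : a ≤ b := by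
  rwa [Ordinal.add_one_eq_succ, Ordinal.add_one_eq_succ, Order.succ_le_succ_iff] at h

lemma osucc_inj {a b : Ordinal} (h : a + 1 = b + 1) : a = b := by
  rwa [Ordinal.add_one_eq_succ, Ordinal.add_one_eq_succ, Order.succ_eq_succ_iff] at h

lemma ole_succ_iff {a b : Ordinal} : a ≤ b + 1 ↔ a ≤ b ∨ a = b + 1 := by
  constructor
  · intro h
    rcases lt_or_eq_of_le h with h | h
    · exact Or.inl (olt_succ_iff.1 h)
    · exact Or.inr h
  · rintro (h | rfl)
    · exact h.trans (olt_succ b).le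
    · exact le_rfl

lemma exists_pred_succ (β : Ordinal) : ∃ γ < β + 1, β + 1 = γ + 1 :=
  ⟨β, olt_succ β, rfl⟩

lemma choose_pred {β : Ordinal} (hs : ∃ γ < β + 1, β + 1 = γ + 1) : hs.choose = β :=
  (osucc_inj hs.choose_spec.2).symm

lemma not_succ_of_limit {o : Ordinal} (h : Order.IsSuccLimit o) : ¬ ∃ β < o, o = β + 1 := by
  rintro ⟨β, hβ, heq⟩
  have h2 := h.succ_lt hβ
  rw [← Ordinal.add_one_eq_succ, ← heq] at h2
  exact lt_irrefl _ h2

/- ## unfolding lemmas -/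

lemma ZSet_zero (E : Set G) : ZSet E 0 = {1} := by rw [ZSet]; simp

lemma ZSet_succ (E : Set G) (β : Ordinal) :
    ZSet E (β + 1) = {x | x ∈ E ∧ ∀ g ∈ E, pcomm x g ∈ ZSet E β} := by
  rw [ZSet, if_neg (osucc_ne_zero β), dif_pos (exists_pred_succ β), choose_pred]

lemma ZSet_limit (E : Set G) {o : Ordinal} (h : Order.IsSuccLimit o) :
    ZSet E o = ⋃ (β : Ordinal) (_ : β < o), ZSet E β := by
  rw [ZSet, if_neg h.ne_zero, dif_neg (not_succ_of_limit h)]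

lemma CIter_zero (E H : Set G) : CIter E H 0 = {1} := by rw [CIter]; simp

lemma CIter_succ (E H : Set G) (β : Ordinal) :
    CIter E H (β + 1) = {x | x ∈ E ∧ (∀ δ < β + 1, ∀ a : G, a ∈ CIter E H δ ↔ x * a * x⁻¹ ∈ CIter E H δ)
       ∧ ∀ h ∈ H, pcomm x h ∈ CIter E H β} := by
  rw [CIter, if_neg (osucc_ne_zero β), dif_pos (exists_pred_succ β), choose_pred]

lemma CIter_limit (E H : Set G) {o : Ordinal} (h : Order.IsSuccLimit o) :
    CIter E H o = ⋃ (β : Ordinal) (_ : β < o), CIter E H β := by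
  rw [CIter, if_neg h.ne_zero, dif_neg (not_succ_of_limit h)]

lemma Env_zero (H : Set G) : Env H 0 = Set.univ := by rw [Env]; simp

lemma Env_succ (H : Set G) (β : Ordinal) :
    Env H (β + 1) = {g | g ∈ Env H β ∧
      ∀ c ∈ CIter (Env H β) H (β + 1), pcomm g c ∈ CIter (Env H β) H β} := by
  rw [Env, if_neg (osucc_ne_zero β), dif_pos (exists_pred_succ β), choose_pred]

lemma Env_limit (H : Set G) {o : Ordinal} (h : Order.IsSuccLimit o) :
    Env H o = ⋂ (β : Ordinal) (_ : β < o), Env H β := by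
  rw [Env, if_neg h.ne_zero, dif_neg (not_succ_of_limit h)]

end Basics
section Comm
variable {G : Type*} [Group G]

lemma pcomm_def (x y : G) : pcomm x y = x⁻¹ * y⁻¹ * x * y := rfl

lemma pcomm_one_left (y : G) : pcomm (1:G) y = 1 := by simp [pcomm]

lemma pcomm_swap (x y : G) : pcomm y x = (pcomm x y)⁻¹ := by simp [pcomm]; group

lemma pcomm_mul_left (x y h : G) :
    pcomm (x*y) h = (y⁻¹ * pcomm x h * y) * pcomm y h := by simp [pcomm]; group

lemma pcomm_inv_left (x h : G) : pcomm x⁻¹ h = x * (pcomm x h)⁻¹ * x⁻¹ := by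
  simp [pcomm]; group

lemma pcomm_conj (x a h : G) :
    pcomm (x*a*x⁻¹) h = x * pcomm a (x⁻¹*h*x) * x⁻¹ := by simp [pcomm]; group

lemma tau_eq (g a : G) : g⁻¹*a*g = a * (pcomm g a)⁻¹ := by simp [pcomm]; group

lemma pcomm_mul_right (a h d : G) :
    pcomm a (h*d) = pcomm a d * (d⁻¹ * pcomm a h * d) := by simp [pcomm]; group

lemma upsilon_eq (g c : G) : g*c*g⁻¹ = c * (g * pcomm g c * g⁻¹) := by simp [pcomm]; group

lemma pcomm_inv_left' (g c : G) : pcomm g⁻¹ c = (g * pcomm g c * g⁻¹)⁻¹ := by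
  simp [pcomm]; group

lemma pcomm_expand (x c : G) : pcomm x c = x⁻¹ * (c⁻¹*x*c) := by simp [pcomm]; group

lemma conj_cancel (x a : G) : x * (x⁻¹*a*x) * x⁻¹ = a := by group

lemma conj_cancel' (x a : G) : x⁻¹ * (x*a*x⁻¹) * x = a := by group

end Comm
section CIterProps
variable {G : Type*} [Group G]

lemma mem_CIter_succ {E Hs : Set G} {β : Ordinal} {x : G} :
    x ∈ CIter E Hs (β+1) ↔ x ∈ E ∧
      (∀ δ < β + 1, ∀ a : G, a ∈ CIter E Hs δ ↔ x * a * x⁻¹ ∈ CIter E Hs δ) ∧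
      ∀ h ∈ Hs, pcomm x h ∈ CIter E Hs β := by
  rw [CIter_succ]; rfl

lemma mem_CIter_limit {E Hs : Set G} {o : Ordinal} (h : Order.IsSuccLimit o) {x : G} :
    x ∈ CIter E Hs o ↔ ∃ β < o, x ∈ CIter E Hs β := by
  rw [CIter_limit E Hs h]; simp

lemma mem_CIter_zero {E Hs : Set G} {x : G} : x ∈ CIter E Hs 0 ↔ x = 1 := by
  rw [CIter_zero]; rfl

lemma iff_conj_inv {S : Set G} {x : G} (h : ∀ a : G, a ∈ S ↔ x*a*x⁻¹ ∈ S) :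
    ∀ a : G, a ∈ S ↔ x⁻¹*a*x ∈ S := by
  intro a
  constructor
  · intro ha
    exact (h (x⁻¹*a*x)).mpr (by rw [conj_cancel]; exact ha)
  · intro ha
    have h2 := (h (x⁻¹*a*x)).mp ha
    rwa [conj_cancel] at h2

structure CGood (E Hs : Set G) (γ : Ordinal) : Prop where
  one : (1:G) ∈ CIter E Hs γ
  mul : ∀ x ∈ CIter E Hs γ, ∀ y ∈ CIter E Hs γ, x*y ∈ CIter E Hs γ
  inv : ∀ x ∈ CIter E Hs γ, x⁻¹ ∈ CIter E Hs γ
  subE : CIter E Hs γ ⊆ E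
  mono : ∀ δ, δ ≤ γ → CIter E Hs δ ⊆ CIter E Hs γ
  norm : ∀ x ∈ CIter E Hs γ, ∀ δ, δ ≤ γ → ∀ a : G, a ∈ CIter E Hs δ ↔ x*a*x⁻¹ ∈ CIter E Hs δ

lemma pcomm_expand2 (a d : G) : pcomm a d = (a⁻¹*d⁻¹*a)*d := by simp [pcomm]

lemma cgood (E Hs : Set G) (hE1 : (1:G) ∈ E) (hEm : ∀ {x y : G}, x ∈ E → y ∈ E → x*y ∈ E)
    (hEi : ∀ {x : G}, x ∈ E → x⁻¹ ∈ E) : ∀ γ : Ordinal, CGood E Hs γ := by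
  intro γ
  induction γ using Ordinal.induction with
  | _ γ IH =>
  rcases Ordinal.zero_or_succ_or_isSuccLimit γ with rfl | ⟨σ, hσ⟩ | hlim
  · -- zero case
    have hz : ∀ x : G, x ∈ CIter E Hs (0:Ordinal) ↔ x = 1 := fun _ => mem_CIter_zero
    refine ⟨(hz 1).mpr rfl, ?_, ?_, ?_, ?_, ?_⟩
    · intro x hx y hy
      have hx1 := (hz x).mp hx
      have hy1 := (hz y).mp hy
      subst hx1; subst hy1
      exact (hz _).mpr (by simp)
    · intro x hx; rw [(hz x).mp hx]; simpa using (hz 1).mpr rfl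
    · intro x hx; rw [(hz x).mp hx]; exact hE1
    · intro δ hδ; rw [nonpos_iff_eq_zero.mp hδ]
    · intro x hx δ hδ a
      rw [nonpos_iff_eq_zero.mp hδ, (hz x).mp hx]
      simp
  · -- successor case
    rw [← Ordinal.add_one_eq_succ] at hσ
    subst hσ
    have Iσ := IH σ (olt_succ σ)
    have hone : (1:G) ∈ CIter E Hs (σ+1) := by
      refine mem_CIter_succ.mpr ⟨hE1, ?_, ?_⟩
      · intro δ hδ a; simp
      · intro h hh; rw [pcomm_one_left]; exact Iσ.one
    have hmul : ∀ x ∈ CIter E Hs (σ+1), ∀ y ∈ CIter E Hs (σ+1), x*y ∈ CIter E Hs (σ+1) := by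
      intro x hx y hy
      obtain ⟨hxE, hxn, hxc⟩ := mem_CIter_succ.mp hx
      obtain ⟨hyE, hyn, hyc⟩ := mem_CIter_succ.mp hy
      refine mem_CIter_succ.mpr ⟨hEm hxE hyE, ?_, ?_⟩
      · intro δ hδ a
        have he : (x*y)*a*(x*y)⁻¹ = x*(y*a*y⁻¹)*x⁻¹ := by group
        rw [he]
        exact (hyn δ hδ a).trans (hxn δ hδ _)
      · intro h hh
        rw [pcomm_mul_left]
        exact Iσ.mul _ ((iff_conj_inv (hyn σ (olt_succ σ)) _).mp (hxc h hh)) _ (hyc h hh)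
    have hinv : ∀ x ∈ CIter E Hs (σ+1), x⁻¹ ∈ CIter E Hs (σ+1) := by
      intro x hx
      obtain ⟨hxE, hxn, hxc⟩ := mem_CIter_succ.mp hx
      refine mem_CIter_succ.mpr ⟨hEi hxE, ?_, ?_⟩
      · intro δ hδ a
        have h2 := iff_conj_inv (hxn δ hδ) a
        rw [inv_inv]; exact h2
      · intro h hh
        rw [pcomm_inv_left]
        exact (hxn σ (olt_succ σ) _).mp (Iσ.inv _ (hxc h hh))
    have hsubE : CIter E Hs (σ+1) ⊆ E := fun x hx => (mem_CIter_succ.mp hx).1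
    have hstep : CIter E Hs σ ⊆ CIter E Hs (σ+1) := by
      intro x hx
      refine mem_CIter_succ.mpr ⟨Iσ.subE hx, fun δ hδ => Iσ.norm x hx δ (olt_succ_iff.1 hδ), ?_⟩
      intro h hh
      rcases Ordinal.zero_or_succ_or_isSuccLimit σ with rfl | ⟨τ, hτ⟩ | hlim'
      · rw [mem_CIter_zero] at hx
        subst hx; rw [pcomm_one_left]; exact Iσ.one
      · rw [← Ordinal.add_one_eq_succ] at hτ
        have hx' : x ∈ CIter E Hs (τ+1) := hτ ▸ hx
        have h2 := (mem_CIter_succ.mp hx').2.2 h hh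
        exact Iσ.mono τ (by rw [← hτ]; exact (olt_succ τ).le) h2
      · obtain ⟨β, hβ, hxβ⟩ := (mem_CIter_limit hlim').mp hx
        have hsb : β + 1 < σ := by rw [Ordinal.add_one_eq_succ]; exact hlim'.succ_lt hβ
        have hx1 : x ∈ CIter E Hs (β+1) :=
          (IH (β+1) (hsb.trans (olt_succ σ))).mono β (olt_succ β).le hxβ
        have h2 := (mem_CIter_succ.mp hx1).2.2 h hh
        exact Iσ.mono β hβ.le h2
    have hmono : ∀ δ, δ ≤ σ+1 → CIter E Hs δ ⊆ CIter E Hs (σ+1) := by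
      intro δ hδ
      rcases ole_succ_iff.1 hδ with h | rfl
      · exact (Iσ.mono δ h).trans hstep
      · exact subset_rfl
    have hself : ∀ x ∈ CIter E Hs (σ+1), ∀ a ∈ CIter E Hs (σ+1), x*a*x⁻¹ ∈ CIter E Hs (σ+1) := by
      intro x hx a ha
      obtain ⟨hxE, hxn, hxc⟩ := mem_CIter_succ.mp hx
      obtain ⟨haE, han, hac⟩ := mem_CIter_succ.mp ha
      refine mem_CIter_succ.mpr ⟨hEm (hEm hxE haE) (hEi hxE), ?_, ?_⟩
      · intro δ hδ e
        have hx' := iff_conj_inv (hxn δ hδ)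
        have he : (x*a*x⁻¹)*e*(x*a*x⁻¹)⁻¹ = x*(a*(x⁻¹*e*x)*a⁻¹)*x⁻¹ := by group
        rw [he]
        exact (hx' e).trans ((han δ hδ _).trans (hxn δ hδ _))
      · intro h hh
        rw [pcomm_conj, tau_eq x h, pcomm_mul_right]
        refine (hxn σ (olt_succ σ) _).mp (Iσ.mul _ ?_ _ ?_)
        · rw [pcomm_expand2]
          refine Iσ.mul _ ?_ _ (Iσ.inv _ (hxc h hh))
          exact (iff_conj_inv (han σ (olt_succ σ)) _).mp (Iσ.inv _ (Iσ.inv _ (hxc h hh)))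
        · exact (iff_conj_inv (Iσ.norm _ (Iσ.inv _ (hxc h hh)) σ le_rfl) _).mp (hac h hh)
    have hnorm : ∀ x ∈ CIter E Hs (σ+1), ∀ δ, δ ≤ σ+1 →
        ∀ a : G, a ∈ CIter E Hs δ ↔ x*a*x⁻¹ ∈ CIter E Hs δ := by
      intro x hx δ hδ a
      rcases ole_succ_iff.1 hδ with h | rfl
      · exact (mem_CIter_succ.mp hx).2.1 δ (olt_succ_iff.2 h) a
      · constructor
        · exact fun ha => hself x hx a ha
        · intro h2
          have h3 := hself _ (hinv x hx) _ h2
          rwa [show x⁻¹*(x*a*x⁻¹)*x⁻¹⁻¹ = a by group] at h3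
    exact ⟨hone, hmul, hinv, hsubE, hmono, hnorm⟩
  · -- limit case
    have hmemL : ∀ x:G, x ∈ CIter E Hs γ ↔ ∃ β < γ, x ∈ CIter E Hs β :=
      fun x => mem_CIter_limit hlim
    have hpos : (0:Ordinal) < γ := pos_iff_ne_zero.mpr hlim.ne_zero
    have hone : (1:G) ∈ CIter E Hs γ := (hmemL 1).mpr ⟨0, hpos, mem_CIter_zero.mpr rfl⟩
    have hmul : ∀ x ∈ CIter E Hs γ, ∀ y ∈ CIter E Hs γ, x*y ∈ CIter E Hs γ := by
      intro x hx y hy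
      obtain ⟨β₁, hβ₁, hx₁⟩ := (hmemL x).mp hx
      obtain ⟨β₂, hβ₂, hy₂⟩ := (hmemL y).mp hy
      have hρ : max β₁ β₂ < γ := max_lt hβ₁ hβ₂
      have I := IH _ hρ
      exact (hmemL _).mpr ⟨_, hρ, I.mul _ (I.mono β₁ (le_max_left _ _) hx₁) _
        (I.mono β₂ (le_max_right _ _) hy₂)⟩
    have hinv : ∀ x ∈ CIter E Hs γ, x⁻¹ ∈ CIter E Hs γ := by
      intro x hx
      obtain ⟨β, hβ, hxβ⟩ := (hmemL x).mp hx
      exact (hmemL _).mpr ⟨β, hβ, (IH β hβ).inv _ hxβ⟩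
    have hsubE : CIter E Hs γ ⊆ E := by
      intro x hx
      obtain ⟨β, hβ, hxβ⟩ := (hmemL x).mp hx
      exact (IH β hβ).subE hxβ
    have hmono : ∀ δ, δ ≤ γ → CIter E Hs δ ⊆ CIter E Hs γ := by
      intro δ hδ
      rcases lt_or_eq_of_le hδ with h | rfl
      · exact fun x hx => (hmemL x).mpr ⟨δ, h, hx⟩
      · exact subset_rfl
    have hnorm : ∀ x ∈ CIter E Hs γ, ∀ δ, δ ≤ γ →
        ∀ a : G, a ∈ CIter E Hs δ ↔ x*a*x⁻¹ ∈ CIter E Hs δ := by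
      intro x hx δ hδ a
      obtain ⟨β, hβ, hxβ⟩ := (hmemL x).mp hx
      rcases lt_or_eq_of_le hδ with h | rfl
      · have hρ : max β δ < γ := max_lt hβ h
        have I := IH _ hρ
        exact I.norm x (I.mono β (le_max_left _ _) hxβ) δ (le_max_right _ _) a
      · constructor
        · intro ha
          obtain ⟨β₂, hβ₂, ha₂⟩ := (hmemL a).mp ha
          have hρ : max β β₂ < δ := max_lt hβ hβ₂
          have I := IH _ hρ
          exact (hmemL _).mpr ⟨_, hρ, (I.norm x (I.mono β (le_max_left _ _) hxβ) _ le_rfl a).mp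
            (I.mono β₂ (le_max_right _ _) ha₂)⟩
        · intro h2
          obtain ⟨β₂, hβ₂, h2'⟩ := (hmemL _).mp h2
          have hρ : max β β₂ < δ := max_lt hβ hβ₂
          have I := IH _ hρ
          exact (hmemL _).mpr ⟨_, hρ, (I.norm x (I.mono β (le_max_left _ _) hxβ) _ le_rfl a).mpr
            (I.mono β₂ (le_max_right _ _) h2')⟩
    exact ⟨hone, hmul, hinv, hsubE, hmono, hnorm⟩

end CIterProps
section Claims
variable {G : Type*} [Group G]

lemma mem_ZSet_succ {E : Set G} {β : Ordinal} {x : G} :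
    x ∈ ZSet E (β+1) ↔ x ∈ E ∧ ∀ g ∈ E, pcomm x g ∈ ZSet E β := by
  rw [ZSet_succ]; rfl

lemma mem_ZSet_limit {E : Set G} {o : Ordinal} (h : Order.IsSuccLimit o) {x : G} :
    x ∈ ZSet E o ↔ ∃ β < o, x ∈ ZSet E β := by
  rw [ZSet_limit E h]; simp

lemma mem_ZSet_zero {E : Set G} {x : G} : x ∈ ZSet E 0 ↔ x = 1 := by
  rw [ZSet_zero]; rfl

lemma mem_Env_succ {Hs : Set G} {β : Ordinal} {g : G} :
    g ∈ Env Hs (β+1) ↔ g ∈ Env Hs β ∧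
      ∀ c ∈ CIter (Env Hs β) Hs (β+1), pcomm g c ∈ CIter (Env Hs β) Hs β := by
  rw [Env_succ]; rfl

lemma mem_Env_limit {Hs : Set G} {o : Ordinal} (h : Order.IsSuccLimit o) {g : G} :
    g ∈ Env Hs o ↔ ∀ β < o, g ∈ Env Hs β := by
  rw [Env_limit Hs h]; simp

/-- every element of the subgroup `H` normalizes every iterated centralizer. -/
lemma claimN (E : Set G) (H : Subgroup G)
    (hEm : ∀ {x y : G}, x ∈ E → y ∈ E → x*y ∈ E)
    (hEi : ∀ {x : G}, x ∈ E → x⁻¹ ∈ E) (hHE : (H : Set G) ⊆ E) :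
    ∀ δ : Ordinal, ∀ h ∈ H, ∀ a : G,
      a ∈ CIter E (H : Set G) δ ↔ h*a*h⁻¹ ∈ CIter E (H : Set G) δ := by
  intro δ
  induction δ using Ordinal.induction with
  | _ δ IH =>
  intro h hh a
  rcases Ordinal.zero_or_succ_or_isSuccLimit δ with rfl | ⟨σ, hσ⟩ | hlim
  · rw [mem_CIter_zero, mem_CIter_zero]
    constructor
    · rintro rfl; simp
    · intro h1
      have : a = h⁻¹ * (h*a*h⁻¹) * h := by group
      rw [this, h1]; simp
  · rw [← Ordinal.add_one_eq_succ] at hσ; subst hσ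
    have fwd : ∀ h' ∈ H, ∀ b ∈ CIter E (H : Set G) (σ+1),
        h'*b*h'⁻¹ ∈ CIter E (H : Set G) (σ+1) := by
      intro h' hh' b hb
      obtain ⟨hbE, hbn, hbc⟩ := mem_CIter_succ.mp hb
      refine mem_CIter_succ.mpr
        ⟨hEm (hEm (hHE (SetLike.mem_coe.mpr hh')) hbE) (hEi (hHE (SetLike.mem_coe.mpr hh'))),
          ?_, ?_⟩
      · intro δ' hδ' e
        have he2 : (h'*b*h'⁻¹)*e*(h'*b*h'⁻¹)⁻¹ = h'*(b*(h'⁻¹*e*h')*b⁻¹)*h'⁻¹ := by group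
        rw [he2]
        exact (iff_conj_inv (IH δ' hδ' h' hh') e).trans
          ((hbn δ' hδ' _).trans (IH δ' hδ' h' hh' _))
      · intro h₂ hh₂
        rw [pcomm_conj]
        have hmem2 : h'⁻¹*h₂*h' ∈ H :=
          mul_mem (mul_mem (inv_mem hh') (SetLike.mem_coe.mp hh₂)) hh'
        exact (IH σ (olt_succ σ) h' hh' _).mp (hbc _ (SetLike.mem_coe.mpr hmem2))
    constructor
    · exact fun ha => fwd h hh a ha
    · intro h2
      have h3 := fwd h⁻¹ (inv_mem hh) _ h2
      rwa [show h⁻¹*(h*a*h⁻¹)*h⁻¹⁻¹ = a by group] at h3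
  · constructor
    · intro ha
      obtain ⟨β, hβ, haβ⟩ := (mem_CIter_limit hlim).mp ha
      exact (mem_CIter_limit hlim).mpr ⟨β, hβ, (IH β hβ h hh _).mp haβ⟩
    · intro h2
      obtain ⟨β, hβ, h2'⟩ := (mem_CIter_limit hlim).mp h2
      exact (mem_CIter_limit hlim).mpr ⟨β, hβ, (IH β hβ h hh _).mpr h2'⟩

lemma zset_sub (H : Subgroup G) : ∀ β : Ordinal, ZSet (H : Set G) β ⊆ (H : Set G) := by
  intro β
  induction β using Ordinal.induction with
  | _ β IH =>
  rcases Ordinal.zero_or_succ_or_isSuccLimit β with rfl | ⟨σ, hσ⟩ | hlim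
  · intro x hx
    rw [mem_ZSet_zero] at hx
    subst hx; exact SetLike.mem_coe.mpr (one_mem H)
  · rw [← Ordinal.add_one_eq_succ] at hσ; subst hσ
    exact fun x hx => (mem_ZSet_succ.mp hx).1
  · intro x hx
    obtain ⟨β', hβ', hx'⟩ := (mem_ZSet_limit hlim).mp hx
    exact IH β' hβ' hx'

/-- hypercentral layers sit inside the iterated centralizers. -/
lemma claimZ (E : Set G) (H : Subgroup G)
    (hEm : ∀ {x y : G}, x ∈ E → y ∈ E → x*y ∈ E)
    (hEi : ∀ {x : G}, x ∈ E → x⁻¹ ∈ E) (hHE : (H : Set G) ⊆ E) :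
    ∀ β : Ordinal, ZSet (H : Set G) β ⊆ CIter E (H : Set G) β := by
  intro β
  induction β using Ordinal.induction with
  | _ β IH =>
  rcases Ordinal.zero_or_succ_or_isSuccLimit β with rfl | ⟨σ, hσ⟩ | hlim
  · intro x hx
    rw [mem_ZSet_zero] at hx
    exact mem_CIter_zero.mpr hx
  · rw [← Ordinal.add_one_eq_succ] at hσ; subst hσ
    intro x hx
    obtain ⟨hxH, hxc⟩ := mem_ZSet_succ.mp hx
    refine mem_CIter_succ.mpr ⟨hHE hxH, ?_, ?_⟩
    · intro δ' hδ' a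
      exact claimN E H hEm hEi hHE δ' x (SetLike.mem_coe.mp hxH) a
    · intro h hh
      exact IH σ (olt_succ σ) (hxc h hh)
  · intro x hx
    obtain ⟨β', hβ', hx'⟩ := (mem_ZSet_limit hlim).mp hx
    exact (mem_CIter_limit hlim).mpr ⟨β', hβ', IH β' hβ' hx'⟩

lemma env_antitone (Hs : Set G) : ∀ β : Ordinal, ∀ δ ≤ β, Env Hs β ⊆ Env Hs δ := by
  intro β
  induction β using Ordinal.induction with
  | _ β IH =>
  intro δ hδ
  rcases Ordinal.zero_or_succ_or_isSuccLimit β with rfl | ⟨σ, hσ⟩ | hlim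
  · rw [nonpos_iff_eq_zero.mp hδ]
  · rw [← Ordinal.add_one_eq_succ] at hσ; subst hσ
    rcases ole_succ_iff.1 hδ with h | rfl
    · have h1 : Env Hs (σ+1) ⊆ Env Hs σ := fun g hg => (mem_Env_succ.mp hg).1
      exact h1.trans (IH σ (olt_succ σ) δ h)
    · exact subset_rfl
  · rcases lt_or_eq_of_le hδ with h | rfl
    · exact fun g hg => (mem_Env_limit hlim).mp hg δ h
    · exact subset_rfl

/-- the bridge: if all the iterated centralizers of `E₀` up to `Λ` are contained in
`E₁ ⊆ E₀`, then the chains of `E₀` and `E₁` agree up to `Λ`. -/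
lemma citer_congr (E₀ E₁ Hs : Set G) (h01 : E₁ ⊆ E₀) (Λ : Ordinal)
    (hmem : ∀ δ, δ ≤ Λ → CIter E₀ Hs δ ⊆ E₁) :
    ∀ γ, γ ≤ Λ → CIter E₁ Hs γ = CIter E₀ Hs γ := by
  intro γ
  induction γ using Ordinal.induction with
  | _ γ IH =>
  intro hγ
  rcases Ordinal.zero_or_succ_or_isSuccLimit γ with rfl | ⟨σ, hσ⟩ | hlim
  · rw [CIter_zero, CIter_zero]
  · rw [← Ordinal.add_one_eq_succ] at hσ; subst hσ
    have hIH : ∀ δ < σ + 1, CIter E₁ Hs δ = CIter E₀ Hs δ := fun δ hδ =>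
      IH δ hδ ((olt_succ_iff.1 hδ).trans ((olt_succ σ).le.trans hγ))
    ext x
    constructor
    · intro hx
      obtain ⟨hxE, hxn, hxc⟩ := mem_CIter_succ.mp hx
      refine mem_CIter_succ.mpr ⟨h01 hxE, ?_, ?_⟩
      · intro δ hδ a
        rw [← hIH δ hδ]; exact hxn δ hδ a
      · intro h hh
        rw [← hIH σ (olt_succ σ)]; exact hxc h hh
    · intro hx
      obtain ⟨hxE, hxn, hxc⟩ := mem_CIter_succ.mp hx
      refine mem_CIter_succ.mpr ⟨hmem (σ+1) hγ hx, ?_, ?_⟩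
      · intro δ hδ a
        rw [hIH δ hδ]; exact hxn δ hδ a
      · intro h hh
        rw [hIH σ (olt_succ σ)]; exact hxc h hh
  · ext x
    rw [mem_CIter_limit hlim, mem_CIter_limit hlim]
    constructor
    · rintro ⟨β, hβ, hx⟩
      exact ⟨β, hβ, (IH β hβ (hβ.le.trans hγ)) ▸ hx⟩
    · rintro ⟨β, hβ, hx⟩
      exact ⟨β, hβ, (IH β hβ (hβ.le.trans hγ)).symm ▸ hx⟩

end Claims
section EnvProps
variable {G : Type*} [Group G]

lemma osucc_le_iff {a b : Ordinal} : a + 1 ≤ b ↔ a < b := by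
  rw [Ordinal.add_one_eq_succ, Order.succ_le_iff]

structure EGood (H : Subgroup G) (σ : Ordinal) : Prop where
  one : (1:G) ∈ Env (H : Set G) σ
  mul : ∀ x ∈ Env (H : Set G) σ, ∀ y ∈ Env (H : Set G) σ, x*y ∈ Env (H : Set G) σ
  inv : ∀ x ∈ Env (H : Set G) σ, x⁻¹ ∈ Env (H : Set G) σ
  hsub : (H : Set G) ⊆ Env (H : Set G) σ
  citer_eq : ∀ δ, δ ≤ σ → ∀ γ, γ ≤ δ →
    CIter (Env (H : Set G) σ) (H : Set G) γ = CIter (Env (H : Set G) δ) (H : Set G) γ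
  succ_sub : ∀ τ, σ = τ + 1 →
    CIter (Env (H : Set G) (τ+1)) (H : Set G) (τ+1) ⊆ CIter (Env (H : Set G) τ) (H : Set G) (τ+1)

lemma EGood.cg {H : Subgroup G} {σ : Ordinal} (hG : EGood H σ) :
    ∀ γ : Ordinal, CGood (Env (H : Set G) σ) (H : Set G) γ :=
  cgood _ _ hG.one (fun {x y} hx hy => hG.mul x hx y hy) (fun {x} hx => hG.inv x hx)

lemma claimV (H : Subgroup G) (τ : Ordinal) (hGτ : EGood H τ) :
    ∀ γ, γ ≤ τ → CIter (Env (H : Set G) τ) (H : Set G) γ ⊆ Env (H : Set G) (τ+1) := by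
  intro γ hγ x hx
  have cg := hGτ.cg
  refine mem_Env_succ.mpr ⟨(cg γ).subE hx, ?_⟩
  intro c hc
  have hcn := (mem_CIter_succ.mp hc).2.1 γ (olt_succ_iff.2 hγ)
  have h1 : c⁻¹*x*c ∈ CIter (Env (H : Set G) τ) (H : Set G) γ := (iff_conj_inv hcn x).mp hx
  have h2 := (cg γ).mul _ ((cg γ).inv _ hx) _ h1
  rw [pcomm_expand]
  exact (cg τ).mono γ hγ h2

lemma egood (H : Subgroup G) : ∀ σ : Ordinal, EGood H σ := by
  intro σ
  induction σ using Ordinal.induction with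
  | _ σ IH =>
  rcases Ordinal.zero_or_succ_or_isSuccLimit σ with rfl | ⟨τ, hτ⟩ | hlim
  · refine ⟨?_, ?_, ?_, ?_, ?_, ?_⟩
    · rw [Env_zero]; trivial
    · intro x _ y _; rw [Env_zero]; trivial
    · intro x _; rw [Env_zero]; trivial
    · intro x _; rw [Env_zero]; trivial
    · intro δ hδ γ hγ; rw [nonpos_iff_eq_zero.mp hδ]
    · intro τ h; exact absurd h.symm (osucc_ne_zero τ)
  · rw [← Ordinal.add_one_eq_succ] at hτ; subst hτ
    have hGτ := IH τ (olt_succ τ)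
    have cgτ := hGτ.cg
    have hbr : ∀ γ, γ ≤ τ →
        CIter (Env (H : Set G) (τ+1)) (H : Set G) γ = CIter (Env (H : Set G) τ) (H : Set G) γ :=
      citer_congr _ _ _ (fun g hg => (mem_Env_succ.mp hg).1) τ (fun δ hδ => claimV H τ hGτ δ hδ)
    have hss : CIter (Env (H : Set G) (τ+1)) (H : Set G) (τ+1) ⊆
        CIter (Env (H : Set G) τ) (H : Set G) (τ+1) := by
      intro x hx
      obtain ⟨hxE, hxn, hxc⟩ := mem_CIter_succ.mp hx
      refine mem_CIter_succ.mpr ⟨(mem_Env_succ.mp hxE).1, ?_, ?_⟩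
      · intro δ hδ a; rw [← hbr δ (olt_succ_iff.1 hδ)]; exact hxn δ hδ a
      · intro h hh; rw [← hbr τ le_rfl]; exact hxc h hh
    have hsub : (H : Set G) ⊆ Env (H : Set G) (τ+1) := by
      intro h hh
      refine mem_Env_succ.mpr ⟨hGτ.hsub hh, ?_⟩
      intro c hc
      have h1 := (mem_CIter_succ.mp hc).2.2 h hh
      have h2 := (cgτ τ).inv _ h1
      rwa [← pcomm_swap] at h2
    have hKS : ∀ g ∈ Env (H : Set G) (τ+1), ∀ δ', δ' ≤ τ →
        ∀ c ∈ CIter (Env (H : Set G) τ) (H : Set G) (δ'+1),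
        pcomm g c ∈ CIter (Env (H : Set G) τ) (H : Set G) δ' := by
      intro g hg δ' hδ' c hc
      rcases lt_or_eq_of_le hδ' with hlt | rfl
      · have hδ1 : δ' + 1 ≤ τ := osucc_le_iff.2 hlt
        rw [hGτ.citer_eq (δ'+1) hδ1 (δ'+1) le_rfl] at hc
        have hG1 := IH (δ'+1) (lt_of_le_of_lt hδ1 (olt_succ τ))
        have hc2 : c ∈ CIter (Env (H : Set G) δ') (H : Set G) (δ'+1) := hG1.succ_sub δ' rfl hc
        have hgm : g ∈ Env (H : Set G) (δ'+1) :=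
          env_antitone _ (τ+1) (δ'+1) (hδ1.trans (olt_succ τ).le) hg
        have h3 := (mem_Env_succ.mp hgm).2 c hc2
        rw [hGτ.citer_eq δ' hδ' δ' le_rfl]
        exact h3
      · exact (mem_Env_succ.mp hg).2 c hc
    have htau : ∀ g ∈ Env (H : Set G) (τ+1), ∀ δ, δ ≤ τ+1 →
        ∀ c ∈ CIter (Env (H : Set G) τ) (H : Set G) δ,
        g⁻¹*c*g ∈ CIter (Env (H : Set G) τ) (H : Set G) δ := by
      intro g hg δ
      induction δ using Ordinal.induction with
      | _ δ IH2 =>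
      intro hδ c hc
      rcases Ordinal.zero_or_succ_or_isSuccLimit δ with rfl | ⟨δ', hδ'⟩ | hlim'
      · rw [mem_CIter_zero] at hc; subst hc
        have : g⁻¹*1*g = 1 := by group
        rw [this]; exact (cgτ 0).one
      · rw [← Ordinal.add_one_eq_succ] at hδ'; subst hδ'
        have hw := hKS g hg δ' (osucc_le_succ hδ) c hc
        rw [tau_eq]
        exact (cgτ (δ'+1)).mul _ hc _
          ((cgτ (δ'+1)).mono δ' (olt_succ δ').le ((cgτ δ').inv _ hw))
      · obtain ⟨β, hβ, hcβ⟩ := (mem_CIter_limit hlim').mp hc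
        exact (mem_CIter_limit hlim').mpr ⟨β, hβ, IH2 β hβ (hβ.le.trans hδ) _ hcβ⟩
    have hups : ∀ g ∈ Env (H : Set G) (τ+1), ∀ δ, δ ≤ τ+1 →
        ∀ c ∈ CIter (Env (H : Set G) τ) (H : Set G) δ,
        g*c*g⁻¹ ∈ CIter (Env (H : Set G) τ) (H : Set G) δ := by
      intro g hg δ
      induction δ using Ordinal.induction with
      | _ δ IH2 =>
      intro hδ c hc
      rcases Ordinal.zero_or_succ_or_isSuccLimit δ with rfl | ⟨δ', hδ'⟩ | hlim'
      · rw [mem_CIter_zero] at hc; subst hc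
        have : g*1*g⁻¹ = 1 := by group
        rw [this]; exact (cgτ 0).one
      · rw [← Ordinal.add_one_eq_succ] at hδ'; subst hδ'
        have hw := hKS g hg δ' (osucc_le_succ hδ) c hc
        have hv := IH2 δ' (olt_succ δ') ((olt_succ δ').le.trans hδ) _ hw
        rw [upsilon_eq]
        exact (cgτ (δ'+1)).mul _ hc _ ((cgτ (δ'+1)).mono δ' (olt_succ δ').le hv)
      · obtain ⟨β, hβ, hcβ⟩ := (mem_CIter_limit hlim').mp hc
        exact (mem_CIter_limit hlim').mpr ⟨β, hβ, IH2 β hβ (hβ.le.trans hδ) _ hcβ⟩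
    have hone : (1:G) ∈ Env (H : Set G) (τ+1) :=
      mem_Env_succ.mpr ⟨hGτ.one, fun c _ => by rw [pcomm_one_left]; exact (cgτ τ).one⟩
    have hmul : ∀ x ∈ Env (H : Set G) (τ+1), ∀ y ∈ Env (H : Set G) (τ+1),
        x*y ∈ Env (H : Set G) (τ+1) := by
      intro x hx y hy
      refine mem_Env_succ.mpr
        ⟨hGτ.mul _ (mem_Env_succ.mp hx).1 _ (mem_Env_succ.mp hy).1, ?_⟩
      intro c hc
      rw [pcomm_mul_left]
      have h1 := (mem_Env_succ.mp hx).2 c hc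
      have h2 := (mem_Env_succ.mp hy).2 c hc
      exact (cgτ τ).mul _ (htau y hy τ (olt_succ τ).le _ h1) _ h2
    have hinv : ∀ x ∈ Env (H : Set G) (τ+1), x⁻¹ ∈ Env (H : Set G) (τ+1) := by
      intro x hx
      refine mem_Env_succ.mpr ⟨hGτ.inv _ (mem_Env_succ.mp hx).1, ?_⟩
      intro c hc
      rw [pcomm_inv_left']
      have h1 := (mem_Env_succ.mp hx).2 c hc
      exact (cgτ τ).inv _ (hups x hx τ (olt_succ τ).le _ h1)
    have hceq : ∀ δ, δ ≤ τ+1 → ∀ γ, γ ≤ δ →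
        CIter (Env (H : Set G) (τ+1)) (H : Set G) γ = CIter (Env (H : Set G) δ) (H : Set G) γ := by
      intro δ hδ γ hγ
      rcases ole_succ_iff.1 hδ with h | rfl
      · rw [hbr γ (hγ.trans h)]
        exact hGτ.citer_eq δ h γ hγ
      · rfl
    refine ⟨hone, hmul, hinv, hsub, hceq, ?_⟩
    intro τ' hτ'
    have e := osucc_inj hτ'
    subst e
    exact hss
  · have hEdef : ∀ g:G, g ∈ Env (H : Set G) σ ↔ ∀ β < σ, g ∈ Env (H : Set G) β :=
      fun g => mem_Env_limit hlim
    have hone : (1:G) ∈ Env (H : Set G) σ := (hEdef 1).mpr (fun β hβ => (IH β hβ).one)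
    have hmul : ∀ x ∈ Env (H : Set G) σ, ∀ y ∈ Env (H : Set G) σ,
        x*y ∈ Env (H : Set G) σ := by
      intro x hx y hy
      exact (hEdef _).mpr (fun β hβ =>
        (IH β hβ).mul _ ((hEdef x).mp hx β hβ) _ ((hEdef y).mp hy β hβ))
    have hinv : ∀ x ∈ Env (H : Set G) σ, x⁻¹ ∈ Env (H : Set G) σ := by
      intro x hx
      exact (hEdef _).mpr (fun β hβ => (IH β hβ).inv _ ((hEdef x).mp hx β hβ))
    have hsub : (H : Set G) ⊆ Env (H : Set G) σ :=
      fun h hh => (hEdef h).mpr (fun β hβ => (IH β hβ).hsub hh)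
    have hceq : ∀ δ, δ ≤ σ → ∀ γ, γ ≤ δ →
        CIter (Env (H : Set G) σ) (H : Set G) γ = CIter (Env (H : Set G) δ) (H : Set G) γ := by
      intro δ hδ γ hγ
      rcases lt_or_eq_of_le hδ with hδlt | rfl
      swap
      · rfl
      have hmemV : ∀ δ'', δ'' ≤ δ → CIter (Env (H : Set G) δ) (H : Set G) δ'' ⊆
          Env (H : Set G) σ := by
        intro δ'' hδ'' x hx
        refine (hEdef x).mpr (fun β hβ => ?_)
        rcases le_or_gt β δ with hbd | hdb
        · exact env_antitone _ δ β hbd (((IH δ hδlt).cg δ'').subE hx)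
        · have heq := (IH β hβ).citer_eq δ hdb.le δ'' hδ''
          rw [← heq] at hx
          exact ((IH β hβ).cg δ'').subE hx
      exact citer_congr _ _ _ (env_antitone _ σ δ hδlt.le) δ hmemV γ hγ
    refine ⟨hone, hmul, hinv, hsub, hceq, ?_⟩
    intro τ' hτ'
    exact absurd ⟨τ', by rw [hτ']; exact olt_succ τ', hτ'⟩ (not_succ_of_limit hlim)

end EnvProps
section Final
variable {G : Type*} [Group G]

lemma hKS' (H : Subgroup G) (τ : Ordinal) :
    ∀ g ∈ Env (H : Set G) (τ+1), ∀ δ', δ' ≤ τ →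
      ∀ c ∈ CIter (Env (H : Set G) τ) (H : Set G) (δ'+1),
      pcomm g c ∈ CIter (Env (H : Set G) τ) (H : Set G) δ' := by
  have hGτ := egood H τ
  intro g hg δ' hδ' c hc
  rcases lt_or_eq_of_le hδ' with hlt | rfl
  · have hδ1 : δ' + 1 ≤ τ := osucc_le_iff.2 hlt
    rw [hGτ.citer_eq (δ'+1) hδ1 (δ'+1) le_rfl] at hc
    have hG1 := egood H (δ'+1)
    have hc2 : c ∈ CIter (Env (H : Set G) δ') (H : Set G) (δ'+1) := hG1.succ_sub δ' rfl hc
    have hgm : g ∈ Env (H : Set G) (δ'+1) :=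
      env_antitone _ (τ+1) (δ'+1) (hδ1.trans (olt_succ τ).le) hg
    have h3 := (mem_Env_succ.mp hgm).2 c hc2
    rw [hGτ.citer_eq δ' hδ' δ' le_rfl]
    exact h3
  · exact (mem_Env_succ.mp hg).2 c hc

lemma htau' (H : Subgroup G) (τ : Ordinal) :
    ∀ g ∈ Env (H : Set G) (τ+1), ∀ δ, δ ≤ τ+1 →
      ∀ c ∈ CIter (Env (H : Set G) τ) (H : Set G) δ,
      g⁻¹*c*g ∈ CIter (Env (H : Set G) τ) (H : Set G) δ := by
  have cgτ := (egood H τ).cg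
  intro g hg δ
  induction δ using Ordinal.induction with
  | _ δ IH2 =>
  intro hδ c hc
  rcases Ordinal.zero_or_succ_or_isSuccLimit δ with rfl | ⟨δ', hδ'⟩ | hlim'
  · rw [mem_CIter_zero] at hc; subst hc
    have h : g⁻¹*1*g = 1 := by group
    rw [h]; exact (cgτ 0).one
  · rw [← Ordinal.add_one_eq_succ] at hδ'; subst hδ'
    have hw := hKS' H τ g hg δ' (osucc_le_succ hδ) c hc
    rw [tau_eq]
    exact (cgτ (δ'+1)).mul _ hc _
      ((cgτ (δ'+1)).mono δ' (olt_succ δ').le ((cgτ δ').inv _ hw))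
  · obtain ⟨β, hβ, hcβ⟩ := (mem_CIter_limit hlim').mp hc
    exact (mem_CIter_limit hlim').mpr ⟨β, hβ, IH2 β hβ (hβ.le.trans hδ) _ hcβ⟩

lemma hups' (H : Subgroup G) (τ : Ordinal) :
    ∀ g ∈ Env (H : Set G) (τ+1), ∀ δ, δ ≤ τ+1 →
      ∀ c ∈ CIter (Env (H : Set G) τ) (H : Set G) δ,
      g*c*g⁻¹ ∈ CIter (Env (H : Set G) τ) (H : Set G) δ := by
  have cgτ := (egood H τ).cg
  intro g hg δ
  induction δ using Ordinal.induction with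
  | _ δ IH2 =>
  intro hδ c hc
  rcases Ordinal.zero_or_succ_or_isSuccLimit δ with rfl | ⟨δ', hδ'⟩ | hlim'
  · rw [mem_CIter_zero] at hc; subst hc
    have h : g*1*g⁻¹ = 1 := by group
    rw [h]; exact (cgτ 0).one
  · rw [← Ordinal.add_one_eq_succ] at hδ'; subst hδ'
    have hw := hKS' H τ g hg δ' (osucc_le_succ hδ) c hc
    have hv := IH2 δ' (olt_succ δ') ((olt_succ δ').le.trans hδ) _ hw
    rw [upsilon_eq]
    exact (cgτ (δ'+1)).mul _ hc _ ((cgτ (δ'+1)).mono δ' (olt_succ δ').le hv)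
  · obtain ⟨β, hβ, hcβ⟩ := (mem_CIter_limit hlim').mp hc
    exact (mem_CIter_limit hlim').mpr ⟨β, hβ, IH2 β hβ (hβ.le.trans hδ) _ hcβ⟩

lemma env_sub_citer (H : Subgroup G) (α : Ordinal) (hα : Order.IsSuccLimit α)
    (hH : ZSet (H : Set G) α = (H : Set G)) :
    Env (H : Set G) (α+1) ⊆ CIter (Env (H : Set G) (α+1)) (H : Set G) (α+1) := by
  intro g hg
  have hG1 := egood H (α+1)
  have hG0 := egood H α
  have cg0 := hG0.cg
  have htr : ∀ δ, δ ≤ α →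
      CIter (Env (H : Set G) (α+1)) (H : Set G) δ = CIter (Env (H : Set G) α) (H : Set G) δ :=
    fun δ hδ => hG1.citer_eq α (olt_succ α).le δ hδ
  refine mem_CIter_succ.mpr ⟨hg, ?_, ?_⟩
  · intro δ hδ a
    have hδα : δ ≤ α := olt_succ_iff.1 hδ
    rw [htr δ hδα]
    constructor
    · intro ha
      exact hups' H α g hg δ (hδα.trans (olt_succ α).le) a ha
    · intro h2
      have h3 := htau' H α g hg δ (hδα.trans (olt_succ α).le) _ h2
      rwa [show g⁻¹*(g*a*g⁻¹)*g = a by group] at h3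
  · intro h hh
    have hhZ : h ∈ ZSet (H : Set G) α := by rw [hH]; exact hh
    obtain ⟨β, hβ, hZβ⟩ := (mem_ZSet_limit hα).mp hhZ
    have hC : h ∈ CIter (Env (H : Set G) α) (H : Set G) β :=
      claimZ (Env (H : Set G) α) H (fun {x y} hx hy => hG0.mul x hx y hy)
        (fun {x} hx => hG0.inv x hx) hG0.hsub β hZβ
    have hC2 : h ∈ CIter (Env (H : Set G) α) (H : Set G) (α+1) :=
      (cg0 (α+1)).mono β (hβ.le.trans (olt_succ α).le) hC
    have h4 := (mem_Env_succ.mp hg).2 h hC2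
    rw [htr α le_rfl]
    exact h4

lemma citer_collapse (H : Subgroup G) (α : Ordinal) (hα : Order.IsSuccLimit α)
    (hH : ZSet (H : Set G) α = (H : Set G)) :
    ∀ μ, α + 1 ≤ μ → CIter (Env (H : Set G) (α+1)) (H : Set G) μ = Env (H : Set G) (α+1) := by
  intro μ hμ
  have hG1 := egood H (α+1)
  exact subset_antisymm ((hG1.cg μ).subE)
    ((env_sub_citer H α hα hH).trans ((hG1.cg μ).mono (α+1) hμ))

end Final

/-- the chain of envelopes of an `α`-hypercentral subgroup, `α` limit,
stabilizes at `α + 1`. -/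
theorem stmt17 {G : Type*} [Group G] (α : Ordinal) (hα : Order.IsSuccLimit α) (H : Subgroup G)
    (hH : ZSet (H : Set G) α = (H : Set G)) :
    ∀ lam : Ordinal, α + 1 ≤ lam → Env (H : Set G) (α + 1) = Env (H : Set G) lam := by
  intro lam
  induction lam using Ordinal.induction with
  | _ lam IHl =>
  intro hlam
  have hG1 := egood H (α+1)
  rcases Ordinal.zero_or_succ_or_isSuccLimit lam with rfl | ⟨μ, hμ⟩ | hlim
  · exact absurd (nonpos_iff_eq_zero.mp hlam) (osucc_ne_zero α)
  · rw [← Ordinal.add_one_eq_succ] at hμ; subst hμ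
    have hαμ : α ≤ μ := osucc_le_succ hlam
    rcases lt_or_eq_of_le hαμ with hlt | rfl
    swap
    · rfl
    have hle : α + 1 ≤ μ := osucc_le_iff.2 hlt
    have hEq : Env (H : Set G) (α+1) = Env (H : Set G) μ := IHl μ (olt_succ μ) hle
    ext g
    conv_rhs => rw [mem_Env_succ]
    rw [← hEq, citer_collapse H α hα hH (μ+1) (hle.trans (olt_succ μ).le),
      citer_collapse H α hα hH μ hle]
    constructor
    · intro hg
      refine ⟨hg, fun c hc => ?_⟩
      rw [pcomm_def]
      exact hG1.mul _ (hG1.mul _ (hG1.mul _ (hG1.inv _ hg) _ (hG1.inv _ hc)) _ hg) _ hc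
    · exact fun hg => hg.1
  · ext g
    rw [mem_Env_limit hlim]
    have hαlam : α + 1 < lam := by
      rw [Ordinal.add_one_eq_succ]
      exact hlim.succ_lt (lt_of_lt_of_le (olt_succ α) hlam)
    constructor
    · intro hg β hβ
      rcases le_or_gt β (α+1) with h | h
      · exact env_antitone _ (α+1) β h hg
      · exact (IHl β hβ h.le) ▸ hg
    · intro hg
      exact hg (α+1) hαlam
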